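/- For every integer n ≥ 2, let 𝒞 = {S ∈ X_n : the orbit O(S) is a finite set}. Then dim_H(𝒞) = 0, while the lower box dimension of 𝒞 (and hence also its upper box dimension) is infinite. -/

import Mathlib

open Filter
open scoped ENNReal

noncomputable section

namespace GraphTrees

/-- The word length of an element of a free group: the length of its reduced word. -/
def wlen {n : ℕ} (g : FreeGroup (Fin n)) : ℕ := (FreeGroup.toWord g).length

/-- `h` is a prefix of `g`. -/
def IsPref {n : ℕ} (h g : FreeGroup (Fin n)) : Prop :=
  wlen h + wlen (h⁻¹ * g) = wlen g

/-- Vertex sets of infinite connected subtrees of the Cayley graph of the free group on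
`n` generators which contain the identity: subsets containing `1`, infinite, and
prefix-closed. -/
def IsTree {n : ℕ} (S : Set (FreeGroup (Fin n))) : Prop :=
  1 ∈ S ∧ S.Infinite ∧ ∀ g ∈ S, ∀ h : FreeGroup (Fin n), IsPref h g → h ∈ S

/-- The space `X n` of pointed trees. -/
def X (n : ℕ) : Type := {S : Set (FreeGroup (Fin n)) // IsTree S}

variable {n : ℕ}

/-- The pattern `B_S(m)` of radius `m` of a pointed tree. -/
def ball (S : X n) (m : ℕ) : Set (FreeGroup (Fin n)) := {g ∈ S.1 | wlen g ≤ m}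

/-- The set of radii on which two pointed trees have the same pattern. -/
def agreeSet (S S' : X n) : Set ℕ := {m | ball S m = ball S' m}

/-- The ball metric on the space of pointed trees. -/
def tdist (S S' : X n) : ℝ :=
  letI := Classical.propDecidable (S = S')
  if S = S' then 0 else Real.exp (-((sSup (agreeSet S S') : ℕ) : ℝ))

theorem tdist_eq_of_ne {x y : X n} (h : x ≠ y) :
    tdist x y = Real.exp (-((sSup (agreeSet x y) : ℕ) : ℝ)) := by
  unfold tdist
  rw [if_neg h]

theorem ball_mono_eq {x y : X n} {k m : ℕ} (hkm : k ≤ m)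
    (h : ball x m = ball y m) : ball x k = ball y k := by
  ext g
  constructor
  · rintro ⟨hg, hlen⟩
    have hx : g ∈ ball x m := ⟨hg, hlen.trans hkm⟩
    rw [h] at hx
    exact ⟨hx.1, hlen⟩
  · rintro ⟨hg, hlen⟩
    have hy : g ∈ ball y m := ⟨hg, hlen.trans hkm⟩
    rw [← h] at hy
    exact ⟨hy.1, hlen⟩

theorem eq_of_agree_all {x y : X n} (h : ∀ m, ball x m = ball y m) : x = y := by
  apply Subtype.ext
  ext g
  constructor
  · intro hg
    have hx : g ∈ ball x (wlen g) := ⟨hg, le_rfl⟩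
    rw [h] at hx
    exact hx.1
  · intro hg
    have hy : g ∈ ball y (wlen g) := ⟨hg, le_rfl⟩
    rw [← h] at hy
    exact hy.1

theorem bddAbove_agreeSet {x y : X n} (h : x ≠ y) : BddAbove (agreeSet x y) := by
  by_contra hb
  refine h (eq_of_agree_all fun m => ?_)
  rcases not_bddAbove_iff.mp hb m with ⟨k, hk, hmk⟩
  exact ball_mono_eq hmk.le hk

theorem ball_zero (x : X n) : ball x 0 = {1} := by
  ext g
  simp only [ball, Set.mem_setOf_eq, Nat.le_zero, Set.mem_singleton_iff]
  constructor
  · rintro ⟨hg, hlen⟩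
    exact FreeGroup.toWord_eq_nil_iff.mp (List.length_eq_zero_iff.mp hlen)
  · rintro rfl
    exact ⟨x.2.1, by simp [wlen]⟩

theorem zero_mem_agreeSet (x y : X n) : (0 : ℕ) ∈ agreeSet x y := by
  show ball x 0 = ball y 0
  rw [ball_zero, ball_zero]

theorem tdist_nonneg (x y : X n) : 0 ≤ tdist x y := by
  rcases eq_or_ne x y with rfl | h
  · unfold tdist
    rw [if_pos rfl]
  · rw [tdist_eq_of_ne h]
    exact (Real.exp_pos _).le

theorem tdist_self (x : X n) : tdist x x = 0 := by
  unfold tdist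
  rw [if_pos rfl]

theorem tdist_comm (x y : X n) : tdist x y = tdist y x := by
  by_cases h : x = y
  · subst h; rfl
  · have hs : agreeSet x y = agreeSet y x := by
      ext m
      exact eq_comm
    rw [tdist_eq_of_ne h, tdist_eq_of_ne (Ne.symm h), hs]

theorem tdist_ultra (x y z : X n) : tdist x z ≤ max (tdist x y) (tdist y z) := by
  rcases eq_or_ne x z with rfl | hxz
  · exact le_max_of_le_left (by rw [tdist_self]; exact tdist_nonneg x y)
  rcases eq_or_ne x y with rfl | hxy
  · exact le_max_of_le_right le_rfl
  rcases eq_or_ne y z with rfl | hyz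
  · exact le_max_of_le_left le_rfl
  have hbxy := bddAbove_agreeSet hxy
  have hbyz := bddAbove_agreeSet hyz
  have hbxz := bddAbove_agreeSet hxz
  have hma : sSup (agreeSet x y) ∈ agreeSet x y :=
    Nat.sSup_mem ⟨0, zero_mem_agreeSet x y⟩ hbxy
  have hmb : sSup (agreeSet y z) ∈ agreeSet y z :=
    Nat.sSup_mem ⟨0, zero_mem_agreeSet y z⟩ hbyz
  have hmin : min (sSup (agreeSet x y)) (sSup (agreeSet y z)) ∈ agreeSet x z := by
    have h1 : ball x (min (sSup (agreeSet x y)) (sSup (agreeSet y z)))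
        = ball y (min (sSup (agreeSet x y)) (sSup (agreeSet y z))) :=
      ball_mono_eq (min_le_left _ _) hma
    have h2 : ball y (min (sSup (agreeSet x y)) (sSup (agreeSet y z)))
        = ball z (min (sSup (agreeSet x y)) (sSup (agreeSet y z))) :=
      ball_mono_eq (min_le_right _ _) hmb
    exact h1.trans h2
  have hle : min (sSup (agreeSet x y)) (sSup (agreeSet y z)) ≤ sSup (agreeSet x z) :=
    le_csSup hbxz hmin
  rw [tdist_eq_of_ne hxz, tdist_eq_of_ne hxy, tdist_eq_of_ne hyz]
  rcases le_total (sSup (agreeSet x y)) (sSup (agreeSet y z)) with hab | hab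
  · refine le_max_of_le_left (Real.exp_le_exp.mpr ?_)
    have h2 : ((sSup (agreeSet x y) : ℕ) : ℝ) ≤ ((sSup (agreeSet x z) : ℕ) : ℝ) := by
      exact_mod_cast (min_eq_left hab) ▸ hle
    linarith
  · refine le_max_of_le_right (Real.exp_le_exp.mpr ?_)
    have h2 : ((sSup (agreeSet y z) : ℕ) : ℝ) ≤ ((sSup (agreeSet x z) : ℕ) : ℝ) := by
      exact_mod_cast (min_eq_right hab) ▸ hle
    linarith

theorem tdist_triangle (x y z : X n) : tdist x z ≤ tdist x y + tdist y z :=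
  (tdist_ultra x y z).trans
    (max_le (le_add_of_nonneg_right (tdist_nonneg y z))
      (le_add_of_nonneg_left (tdist_nonneg x y)))

instance : MetricSpace (X n) where
  dist := tdist
  dist_self := tdist_self
  dist_comm := tdist_comm
  dist_triangle := tdist_triangle
  eq_of_dist_eq_zero := by
    intro x y h
    by_contra hne
    have h' : tdist x y = 0 := h
    rw [tdist_eq_of_ne hne] at h'
    exact (Real.exp_pos _).ne' h'

theorem dist_eq_tdist (x y : X n) : dist x y = tdist x y := rfl

/-- The translate `S · g` of a tree `S` by a vertex `g ∈ S`. -/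
def translate {n : ℕ} (S : Set (FreeGroup (Fin n))) (g : FreeGroup (Fin n)) :
    Set (FreeGroup (Fin n)) := (fun h => g⁻¹ * h) '' S

/-- The orbit `O(S) = {S · g : g ∈ S}` of a pointed tree under the pseudogroup action. -/
def orbit (S : X n) : Set (X n) := {S' | ∃ g ∈ S.1, S'.1 = translate S.1 g}

/-- A subset `Y ⊆ X n` is invariant under the pseudogroup action. -/
def Invariant (Y : Set (X n)) : Prop :=
  ∀ S ∈ Y, ∀ g ∈ S.1, ∀ S' : X n, S'.1 = translate S.1 g → S' ∈ Y

/-- `Λ(Z, m)`: the number of distinct patterns of radius `m` of trees in `Z`. -/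
def Lam (Z : Set (X n)) (m : ℕ) : ℕ := ((fun S => ball S m) '' Z).ncard

/-- The lower box dimension of a subset of the space of pointed trees. -/
def lowerBox (Z : Set (X n)) : ℝ≥0∞ :=
  Filter.liminf (fun m : ℕ => ENNReal.ofReal (Real.log (Lam Z m)) / (m : ℝ≥0∞)) Filter.atTop

/-- The upper box dimension of a subset of the space of pointed trees. -/
def upperBox (Z : Set (X n)) : ℝ≥0∞ :=
  Filter.limsup (fun m : ℕ => ENNReal.ofReal (Real.log (Lam Z m)) / (m : ℝ≥0∞)) Filter.atTop


open FreeGroup List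
section Words
variable {α : Type*} [DecidableEq α]

abbrev NC (a b : α × Bool) : Prop := ¬(a.1 = b.1 ∧ a.2 = !b.2)

omit [DecidableEq α] in
lemma chain'_of_no_bad {R : (α × Bool) → (α × Bool) → Prop} :
    ∀ L : List (α × Bool), (∀ L₁ a b L₂, L = L₁ ++ a :: b :: L₂ → R a b) → List.Chain' R L
  | [], _ => List.isChain_nil
  | [x], _ => List.isChain_singleton x
  | x :: y :: t, h => by
    apply List.isChain_cons_cons.mpr
    refine ⟨h [] x y t rfl, chain'_of_no_bad (y :: t) ?_⟩
    intro L₁ a b L₂ hd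
    exact h (x :: L₁) a b L₂ (by rw [hd]; rfl)

lemma reduced_of_chain : ∀ L : List (α × Bool), List.Chain' NC L → reduce L = L
  | [], _ => rfl
  | x :: t, h => by
    have ht : reduce t = t := reduced_of_chain t h.tail
    rw [reduce.cons, ht]
    cases t with
    | nil => rfl
    | cons hd tl =>
      have : NC x hd := List.isChain_cons_cons.mp h |>.1
      simp only [this, if_false]

lemma chain_of_reduced (L : List (α × Bool)) (h : reduce L = L) : List.Chain' NC L := by
  apply chain'_of_no_bad
  rintro L₁ ⟨xa, xb⟩ ⟨ya, yb⟩ L₂ rfl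
  rintro ⟨h1, h2⟩
  simp only at h1 h2
  subst h1
  rw [h2] at h
  refine reduce.not (L₁ := L₁ ++ (xa, !yb) :: (xa, yb) :: L₂) (L₂ := L₁) (L₃ := L₂) (x := xa) (b := !yb) ?_
  rwa [Bool.not_not]

lemma reduced_iff_chain {L : List (α × Bool)} : reduce L = L ↔ List.Chain' NC L :=
  ⟨chain_of_reduced L, reduced_of_chain L⟩

lemma reduced_append_left {L₁ L₂ : List (α × Bool)} (h : reduce (L₁ ++ L₂) = L₁ ++ L₂) :
    reduce L₁ = L₁ :=
  reduced_of_chain _ ((chain_of_reduced _ h).prefix (List.prefix_append _ _))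

lemma reduced_append_right {L₁ L₂ : List (α × Bool)} (h : reduce (L₁ ++ L₂) = L₁ ++ L₂) :
    reduce L₂ = L₂ :=
  reduced_of_chain _ ((chain_of_reduced _ h).suffix (List.suffix_append _ _))

lemma reduced_infix {L₁ L₂ : List (α × Bool)} (h2 : reduce L₂ = L₂) (h : L₁ <:+: L₂) :
    reduce L₁ = L₁ :=
  reduced_of_chain _ ((chain_of_reduced _ h2).infix h)

variable {α : Type*} [DecidableEq α]

lemma red_eq_of_length {L₁ L₂ : List (α × Bool)} (h : FreeGroup.Red L₁ L₂)
    (hl : L₁.length = L₂.length) : L₁ = L₂ := by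
  rcases Relation.ReflTransGen.cases_head h with rfl | ⟨c, hs, hr⟩
  · rfl
  · have h1 := hs.length
    have h2 := FreeGroup.Red.length_le hr
    omega

lemma toWord_mul_of_reduced {a b : FreeGroup α}
    (h : reduce (a.toWord ++ b.toWord) = a.toWord ++ b.toWord) :
    (a * b).toWord = a.toWord ++ b.toWord := by
  conv_lhs => rw [← mk_toWord (x := a), ← mk_toWord (x := b)]
  rw [mul_mk, toWord_mk, h]


lemma toWord_mul' (a b : FreeGroup α) : (a * b).toWord = reduce (a.toWord ++ b.toWord) := by
  have h : a * b = FreeGroup.mk (a.toWord ++ b.toWord) := by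
    rw [← mul_mk, mk_toWord, mk_toWord]
  rw [h, toWord_mk]


end Words


variable {n : ℕ}

lemma isPref_iff {h g : FreeGroup (Fin n)} : IsPref h g ↔ h.toWord <+: g.toWord := by
  constructor
  · intro hp
    have h1 : g.toWord = reduce (h.toWord ++ (h⁻¹ * g).toWord) := by
      rw [← toWord_mul']
      congr 1
      group
    have h2 : FreeGroup.Red (h.toWord ++ (h⁻¹ * g).toWord) g.toWord := by
      rw [h1]; exact reduce.red
    have h3 := red_eq_of_length h2 (by
      simp only [List.length_append]
      exact hp)
    exact ⟨(h⁻¹ * g).toWord, h3⟩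
  · rintro ⟨t, ht⟩
    have htred : reduce t = t := by
      have h0 := reduce_toWord g
      rw [← ht] at h0
      exact reduced_append_right h0
    have hinv : h⁻¹ * g = FreeGroup.mk t := by
      have h0 : h * FreeGroup.mk t = g := by
        rw [← mk_toWord (x := g), ← ht, ← mul_mk, mk_toWord]
      rw [← h0]; group
    unfold IsPref wlen
    rw [hinv, toWord_mk, htred, ← ht, List.length_append]

lemma toWord_take_red {g : FreeGroup (Fin n)} (i : ℕ) :
    reduce (g.toWord.take i) = g.toWord.take i :=
  reduced_infix (reduce_toWord g) (List.take_prefix i g.toWord).isInfix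

lemma isPref_take {g : FreeGroup (Fin n)} (i : ℕ) :
    IsPref (FreeGroup.mk (g.toWord.take i)) g := by
  rw [isPref_iff, toWord_mk, toWord_take_red]
  exact List.take_prefix i g.toWord

/-- the complementary part -/
lemma take_mul_drop {g : FreeGroup (Fin n)} (i : ℕ) :
    FreeGroup.mk (g.toWord.take i) * FreeGroup.mk (g.toWord.drop i) = g := by
  rw [mul_mk, List.take_append_drop, mk_toWord]

lemma toWord_drop_red {g : FreeGroup (Fin n)} (i : ℕ) :
    reduce (g.toWord.drop i) = g.toWord.drop i :=
  reduced_infix (reduce_toWord g) (List.drop_suffix i g.toWord).isInfix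

lemma wlen_mul_le (a b : FreeGroup (Fin n)) : wlen (a * b) ≤ wlen a + wlen b := by
  unfold wlen
  rw [toWord_mul']
  calc (reduce (a.toWord ++ b.toWord)).length ≤ (a.toWord ++ b.toWord).length :=
        FreeGroup.Red.length_le reduce.red
    _ = a.toWord.length + b.toWord.length := List.length_append


section TreeLemmas
variable {n : ℕ}

lemma mem_translate {A : Set (FreeGroup (Fin n))} {g x : FreeGroup (Fin n)} :
    x ∈ translate A g ↔ g * x ∈ A := by
  constructor
  · rintro ⟨y, hy, rfl⟩
    simpa using hy
  · intro h
    exact ⟨g * x, h, by group⟩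

lemma translate_one (A : Set (FreeGroup (Fin n))) : translate A 1 = A := by
  ext x; simp [mem_translate]

lemma translate_translate (A : Set (FreeGroup (Fin n))) (u v : FreeGroup (Fin n)) :
    translate (translate A u) v = translate A (u * v) := by
  ext x
  simp only [mem_translate, mul_assoc]

lemma toWord_single (c : Fin n × Bool) : (FreeGroup.mk [c]).toWord = [c] := by
  rw [FreeGroup.toWord_mk, FreeGroup.reduce_singleton]

lemma NC_of_ne {c d : Fin n × Bool} (h : d ≠ (c.1, !c.2)) : NC c d := by
  rintro ⟨h1, h2⟩
  apply h
  rw [Prod.ext_iff]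
  exact ⟨h1.symm, by rw [h2]; simp⟩

lemma single_mul_cancel {c : Fin n × Bool} {x : FreeGroup (Fin n)} {r : List (Fin n × Bool)}
    (hx : x.toWord = (c.1, !c.2) :: r) : (FreeGroup.mk [c] * x).toWord = r := by
  rw [toWord_mul', toWord_single, hx]
  have hred : FreeGroup.reduce ((c.1, !c.2) :: r) = (c.1, !c.2) :: r := by
    rw [← hx]; exact FreeGroup.reduce_toWord x
  show FreeGroup.reduce (c :: (c.1, !c.2) :: r) = r
  rw [FreeGroup.reduce.cons, hred]
  simp

lemma single_mul_nocancel {c : Fin n × Bool} {x : FreeGroup (Fin n)}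
    (h : ∀ r, x.toWord ≠ (c.1, !c.2) :: r) : (FreeGroup.mk [c] * x).toWord = c :: x.toWord := by
  rw [toWord_mul', toWord_single]
  show FreeGroup.reduce (c :: x.toWord) = c :: x.toWord
  apply reduced_of_chain
  apply List.isChain_cons.mpr
  refine ⟨?_, chain_of_reduced _ (FreeGroup.reduce_toWord x)⟩
  intro y hy
  rcases hx : x.toWord with _ | ⟨d, t⟩
  · rw [hx] at hy; simp at hy
  · rw [hx] at hy
    simp only [List.head?_cons, Option.mem_def, Option.some.injEq] at hy
    subst hy
    apply NC_of_ne
    intro hd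
    exact h t (by rw [hx, hd])

lemma isTree_translate_single {A : Set (FreeGroup (Fin n))} (hA : IsTree A)
    (c : Fin n × Bool) (hc : FreeGroup.mk [c] ∈ A) : IsTree (translate A (FreeGroup.mk [c])) := by
  set ℓ := FreeGroup.mk [c] with hℓ
  refine ⟨?_, ?_, ?_⟩
  · rw [mem_translate, mul_one]; exact hc
  · exact Set.Infinite.image (Set.injOn_of_injective (mul_right_injective ℓ⁻¹)) hA.2.1
  · intro x hx h hpref
    rw [mem_translate] at hx ⊢
    rcases isPref_iff.mp hpref with ⟨t, ht⟩
    by_cases hcanc : ∃ r, x.toWord = (c.1, !c.2) :: r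
    · obtain ⟨r, hr⟩ := hcanc
      rcases hh : h.toWord with _ | ⟨d, hrest⟩
      · have : h = 1 := by
          rw [← FreeGroup.toWord_eq_nil_iff, hh]
        rw [this, mul_one]; exact hc
      · have hd : d = (c.1, !c.2) := by
          rw [hh, hr] at ht
          exact (List.cons.injEq _ _ _ _ ▸ ht).1.symm ▸ rfl
        have h1 : (ℓ * x).toWord = r := single_mul_cancel hr
        have h2 : (ℓ * h).toWord = hrest := by
          apply single_mul_cancel
          rw [hh, hd]
        apply hA.2.2 (ℓ * x) hx (ℓ * h)
        rw [isPref_iff, h1, h2]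
        rw [hh, hr] at ht
        simp only [List.cons_append, List.cons.injEq] at ht
        exact ⟨t, ht.2⟩
    · push_neg at hcanc
      have h1 : (ℓ * x).toWord = c :: x.toWord := single_mul_nocancel hcanc
      have h2 : (ℓ * h).toWord = c :: h.toWord := by
        apply single_mul_nocancel
        intro r hr
        rcases ht' : t with _ | ⟨e, t'⟩
        · rw [ht', List.append_nil] at ht
          exact hcanc r (by rw [← ht, hr])
        · exact hcanc (r ++ t) (by rw [← ht, hr, List.cons_append])
      apply hA.2.2 (ℓ * x) hx (ℓ * h)
      rw [isPref_iff, h1, h2]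
      exact ⟨t, by rw [List.cons_append, ht]⟩

lemma wlen_take_lt {g : FreeGroup (Fin n)} (hg : g ≠ 1) :
    wlen (FreeGroup.mk (g.toWord.dropLast)) < wlen g := by
  have hne : g.toWord ≠ [] := fun h => hg (FreeGroup.toWord_eq_nil_iff.mp h)
  have : FreeGroup.reduce g.toWord.dropLast = g.toWord.dropLast := by
    rw [List.dropLast_eq_take]
    exact toWord_take_red _
  unfold wlen
  rw [FreeGroup.toWord_mk, this, List.length_dropLast]
  have := List.length_pos_iff.mpr hne
  omega

lemma isTree_translate {A : Set (FreeGroup (Fin n))} (hA : IsTree A)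
    {g : FreeGroup (Fin n)} (hg : g ∈ A) : IsTree (translate A g) := by
  generalize hk : wlen g = k
  induction k using Nat.strong_induction_on generalizing g with
  | _ k ih =>
    by_cases h1 : g = 1
    · rw [h1, translate_one]; exact hA
    · have hne : g.toWord ≠ [] := fun h => h1 (FreeGroup.toWord_eq_nil_iff.mp h)
      set g' := FreeGroup.mk g.toWord.dropLast with hg'
      set c := g.toWord.getLast hne with hc
      have hsplit : g' * FreeGroup.mk [c] = g := by
        have hdg : g.toWord.dropLast ++ [c] = g.toWord := List.dropLast_concat_getLast hne
        rw [hg', FreeGroup.mul_mk, hdg, FreeGroup.mk_toWord]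
      have hg'A : g' ∈ A := by
        apply hA.2.2 g hg
        rw [hg', List.dropLast_eq_take]
        exact isPref_take _
      have hIH : IsTree (translate A g') :=
        ih (wlen g') (by rw [← hk]; exact wlen_take_lt h1) hg'A rfl
      have hcmem : FreeGroup.mk [c] ∈ translate A g' := by
        rw [mem_translate, hsplit]; exact hg
      have := isTree_translate_single hIH c hcmem
      rwa [translate_translate, hsplit] at this

lemma translate_mem_orbit (S : X n) {g : FreeGroup (Fin n)} (hg : g ∈ S.1) :
    (⟨translate S.1 g, isTree_translate S.2 hg⟩ : X n) ∈ orbit S :=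
  ⟨g, hg, rfl⟩

end TreeLemmas

section Pumping
variable {n : ℕ}

lemma take_mem_tree (S : X n) {g : FreeGroup (Fin n)} (hg : g ∈ S.1) (i : ℕ) :
    FreeGroup.mk (g.toWord.take i) ∈ S.1 :=
  S.2.2.2 g hg _ (isPref_take i)

lemma pump_step {S S' : X n} (hS : (orbit S).Finite) (hS' : (orbit S').Finite)
    {K M : ℕ} (hK : (orbit S).ncard * (orbit S').ncard ≤ K) (hKM : K ≤ M)
    (hball : ball S M = ball S' M) {g : FreeGroup (Fin n)} (hgS : g ∈ S.1)
    (hlen : wlen g = M + 1) : g ∈ S'.1 := by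
  classical
  set h : ℕ → FreeGroup (Fin n) := fun i => FreeGroup.mk (g.toWord.take i) with hh
  have hwlen : ∀ i, i ≤ M + 1 → wlen (h i) = i := by
    intro i hi
    show (FreeGroup.toWord (FreeGroup.mk (g.toWord.take i))).length = i
    rw [FreeGroup.toWord_mk, toWord_take_red, List.length_take]
    unfold wlen at hlen
    omega
  have hmemS : ∀ i, h i ∈ S.1 := fun i => take_mem_tree S hgS i
  have hmemS' : ∀ i, i ≤ M → h i ∈ S'.1 := by
    intro i hi
    have hmem : h i ∈ ball S M := ⟨hmemS i, by rw [hwlen i (by omega)]; omega⟩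
    rw [hball] at hmem
    exact hmem.1
  haveI : Finite ↥(orbit S) := hS.to_subtype
  haveI : Finite ↥(orbit S') := hS'.to_subtype
  set Φ : Fin (K + 1) → ↥(orbit S) × ↥(orbit S') := fun i =>
    (⟨⟨translate S.1 (h i), isTree_translate S.2 (hmemS i)⟩, translate_mem_orbit S (hmemS i)⟩,
     ⟨⟨translate S'.1 (h i),
        isTree_translate S'.2 (hmemS' i ((Nat.lt_succ_iff.mp i.isLt).trans hKM))⟩,
       translate_mem_orbit S' (hmemS' i ((Nat.lt_succ_iff.mp i.isLt).trans hKM))⟩) with hΦ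
  have key : ∀ i j : Fin (K + 1), (i : ℕ) < (j : ℕ) → Φ i = Φ j → g ∈ S'.1 := by
    intro i j hlt heq
    have e1 : translate S.1 (h ↑i) = translate S.1 (h ↑j) := by
      have := congrArg (fun p => ((p.1 : X n).1)) heq
      simpa [hΦ] using this
    have e2 : translate S'.1 (h ↑i) = translate S'.1 (h ↑j) := by
      have := congrArg (fun p => ((p.2 : X n).1)) heq
      simpa [hΦ] using this
    set x : FreeGroup (Fin n) := (h ↑j)⁻¹ * g with hx
    have hxg : h ↑j * x = g := by rw [hx]; group
    have hxw : x = FreeGroup.mk (g.toWord.drop ↑j) := by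
      have h2 : FreeGroup.mk (g.toWord.take ↑j) * FreeGroup.mk (g.toWord.drop ↑j) = g :=
        take_mul_drop ↑j
      rw [hx]
      show (FreeGroup.mk (g.toWord.take ↑j))⁻¹ * g = _
      rw [inv_mul_eq_iff_eq_mul]
      exact h2.symm
    have hwx : wlen x = M + 1 - ↑j := by
      rw [hxw]
      show (FreeGroup.toWord (FreeGroup.mk (g.toWord.drop ↑j))).length = M + 1 - ↑j
      rw [FreeGroup.toWord_mk, toWord_drop_red, List.length_drop]
      unfold wlen at hlen
      omega
    have hxj : x ∈ translate S.1 (h ↑j) := mem_translate.mpr (by rw [hxg]; exact hgS)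
    rw [← e1] at hxj
    have hgi : h ↑i * x ∈ S.1 := mem_translate.mp hxj
    have hji : (j : ℕ) ≤ M + 1 := by have := j.isLt; omega
    have hlen2 : wlen (h ↑i * x) ≤ M := by
      have h1 := wlen_mul_le (h ↑i) x
      rw [hwlen ↑i (by omega), hwx] at h1
      omega
    have hgi' : h ↑i * x ∈ S'.1 := by
      have hmem : h ↑i * x ∈ ball S M := ⟨hgi, hlen2⟩
      rw [hball] at hmem
      exact hmem.1
    have hxj' : x ∈ translate S'.1 (h ↑i) := mem_translate.mpr hgi'
    rw [e2] at hxj'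
    have := mem_translate.mp hxj'
    rwa [hxg] at this
  have hninj : ¬ Function.Injective Φ := by
    intro hinj
    have h1 := Nat.card_le_card_of_injective Φ hinj
    rw [Nat.card_prod, Nat.card_coe_set_eq, Nat.card_coe_set_eq] at h1
    simp only [Nat.card_eq_fintype_card, Fintype.card_fin] at h1
    omega
  obtain ⟨i, j, heq, hne⟩ := Function.not_injective_iff.mp hninj
  rcases lt_or_gt_of_ne hne with hlt | hlt
  · exact key i j hlt heq
  · exact key j i hlt heq.symm

lemma pump {S S' : X n} (hS : (orbit S).Finite) (hS' : (orbit S').Finite)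
    {K : ℕ} (hK : (orbit S).ncard * (orbit S').ncard ≤ K)
    (hball : ball S K = ball S' K) : S = S' := by
  have main : ∀ M, ball S (K + M) = ball S' (K + M) := by
    intro M
    induction M with
    | zero => simpa using hball
    | succ M ih =>
      ext g
      constructor
      · rintro ⟨hg, hlg⟩
        by_cases hc : wlen g ≤ K + M
        · have : g ∈ ball S (K + M) := ⟨hg, hc⟩
          rw [ih] at this
          exact ⟨this.1, hlg⟩
        · have : wlen g = (K + M) + 1 := by omega
          exact ⟨pump_step hS hS' hK (by omega) ih hg this, hlg⟩
      · rintro ⟨hg, hlg⟩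
        by_cases hc : wlen g ≤ K + M
        · have : g ∈ ball S' (K + M) := ⟨hg, hc⟩
          rw [← ih] at this
          exact ⟨this.1, hlg⟩
        · have : wlen g = (K + M) + 1 := by omega
          exact ⟨pump_step hS' hS (le_of_eq_of_le (Nat.mul_comm _ _) hK) (by omega) ih.symm hg this, hlg⟩
  apply eq_of_agree_all
  intro m
  rcases le_or_gt m K with hm | hm
  · exact ball_mono_eq hm hball
  · have := main (m - K)
    rwa [Nat.add_sub_cancel' hm.le] at this

def FGball (n M : ℕ) : Set (FreeGroup (Fin n)) := {g | wlen g ≤ M}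

lemma FGball_finite (n M : ℕ) : (FGball n M).Finite := by
  have h : FGball n M ⊆ FreeGroup.toWord ⁻¹' {L : List (Fin n × Bool) | L.length ≤ M} := by
    intro g hg
    exact hg
  exact ((List.finite_length_le (Fin n × Bool) M).preimage
    (Set.injOn_of_injective FreeGroup.toWord_injective)).subset h

def strat (n k : ℕ) : Set (X n) := {S | (orbit S).Finite ∧ (orbit S).ncard ≤ k}

lemma strat_finite (n k : ℕ) : (strat n k).Finite := by
  apply Set.Finite.of_finite_image (f := fun S => ball S (k * k))
  · apply Set.Finite.subset ((FGball_finite n (k * k)).finite_subsets)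
    rintro P ⟨S, _, rfl⟩
    intro g hg
    exact hg.2
  · rintro S ⟨hSf, hSk⟩ S' ⟨hS'f, hS'k⟩ hba
    exact pump hSf hS'f (Nat.mul_le_mul hSk hS'k) hba

lemma periodic_countable (n : ℕ) : {S : X n | (orbit S).Finite}.Countable := by
  have hsub : {S : X n | (orbit S).Finite} ⊆ ⋃ k, strat n k := by
    intro S hS
    exact Set.mem_iUnion.mpr ⟨(orbit S).ncard, hS, le_rfl⟩
  exact (Set.countable_iUnion (fun k => (strat_finite n k).countable)).mono hsub
end Pumping

section Automaton
variable {n m : ℕ}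

/-- transition function of the permutation automaton -/
def pstep (σ : Equiv.Perm (Fin m)) (v : Fin m) (c : Fin n × Bool) : Option (Fin m) :=
  if c.1.val = 0 then
    (if c.2 then (if h : v.val + 1 < m then some ⟨v.val + 1, h⟩ else none)
     else (if h : 0 < v.val then
            some ⟨v.val - 1, lt_of_le_of_lt (Nat.sub_le _ _) v.isLt⟩ else none))
  else if c.1.val = 1 then
    (if c.2 then some (σ v) else some (σ.symm v))
  else none

lemma pstep_rev {σ : Equiv.Perm (Fin m)} {v w : Fin m} {c : Fin n × Bool}
    (h : pstep σ v c = some w) : pstep σ w (c.1, !c.2) = some v := by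
  obtain ⟨c1, cb⟩ := c
  have hv := v.isLt
  by_cases h0 : c1.val = 0
  · cases cb
    · simp only [pstep, h0, Bool.not_false, if_true, Bool.false_eq_true, if_false, reduceIte]
        at h ⊢
      split_ifs at h with h1
      injection h with h
      subst h
      rw [dif_pos (by omega : (v.val - 1) + 1 < m)]
      exact congrArg some (Fin.ext (by simp; omega))
    · simp only [pstep, h0, Bool.not_true, if_true, Bool.false_eq_true, if_false, reduceIte]
        at h ⊢
      split_ifs at h with h1
      injection h with h
      subst h
      rw [dif_pos (by simp)]
      exact congrArg some (Fin.ext (by simp))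
  · by_cases h1 : c1.val = 1
    · have h10 : ¬ (1 : ℕ) = 0 := by omega
      cases cb
      · simp only [pstep, h0, h1, Bool.not_false, if_false, if_true, Bool.false_eq_true,
          reduceIte, h10] at h ⊢
        injection h with h
        subst h
        simp
      · simp only [pstep, h0, h1, Bool.not_true, if_false, if_true, Bool.false_eq_true,
          reduceIte, h10] at h ⊢
        injection h with h
        subst h
        simp
    · simp only [pstep, h0, h1, if_false] at h
      exact absurd h (by simp)

/-- walk in the automaton -/
def pwalk (σ : Equiv.Perm (Fin m)) : List (Fin n × Bool) → Fin m → Option (Fin m)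
  | [], v => some v
  | c :: L, v => (pstep σ v c).bind (pwalk σ L)

lemma pwalk_append (σ : Equiv.Perm (Fin m)) (L₁ L₂ : List (Fin n × Bool)) (v : Fin m) :
    pwalk σ (L₁ ++ L₂) v = (pwalk σ L₁ v).bind (pwalk σ L₂) := by
  induction L₁ generalizing v with
  | nil => simp [pwalk]
  | cons c t ih =>
    show (pstep σ v c).bind (pwalk σ (t ++ L₂)) = ((pstep σ v c).bind (pwalk σ t)).bind (pwalk σ L₂)
    cases pstep σ v c with
    | none => simp
    | some u => simp [ih u]

lemma pwalk_step {σ : Equiv.Perm (Fin m)} {L₁ L₂ : List (Fin n × Bool)} {v w : Fin m}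
    (hstep : FreeGroup.Red.Step L₁ L₂) (h : pwalk σ L₁ v = some w) : pwalk σ L₂ v = some w := by
  cases hstep with
  | not =>
    rename_i P Q x b
    rw [pwalk_append] at h ⊢
    rcases Option.bind_eq_some_iff.mp h with ⟨u, hu, hrest⟩
    rw [hu, Option.bind_some]
    show pwalk σ Q u = some w
    have hrest' : (pstep σ u (x, b)).bind
        (fun p => (pstep σ p (x, !b)).bind (pwalk σ Q)) = some w := hrest
    rcases Option.bind_eq_some_iff.mp hrest' with ⟨p, hp, h2⟩
    rcases Option.bind_eq_some_iff.mp h2 with ⟨q, hq, h3⟩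
    have : pstep σ p ((x, b).1, !(x, b).2) = some u := pstep_rev hp
    simp only at this
    rw [this] at hq
    injection hq with hq
    rwa [hq]

lemma pwalk_red {σ : Equiv.Perm (Fin m)} {L₁ L₂ : List (Fin n × Bool)} {v w : Fin m}
    (hred : FreeGroup.Red L₁ L₂) (h : pwalk σ L₁ v = some w) : pwalk σ L₂ v = some w := by
  induction hred with
  | refl => exact h
  | tail _ hstep ih => exact pwalk_step hstep ih

lemma pwalk_invRev {σ : Equiv.Perm (Fin m)} {L : List (Fin n × Bool)} {v w : Fin m}
    (h : pwalk σ L v = some w) : pwalk σ (FreeGroup.invRev L) w = some v := by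
  induction L generalizing v with
  | nil =>
    injection h with h
    rw [FreeGroup.invRev, h]
    exact rfl
  | cons c t ih =>
    rcases Option.bind_eq_some_iff.mp h with ⟨u, hu, hw⟩
    have hrev : FreeGroup.invRev (c :: t) = FreeGroup.invRev t ++ [(c.1, !c.2)] := by
      simp [FreeGroup.invRev]
    rw [hrev, pwalk_append, ih hw, Option.bind_some]
    show (pstep σ u (c.1, !c.2)).bind (pwalk σ []) = some v
    rw [pstep_rev hu]
    rfl

/-- the tree of readable words -/
def pSet (σ : Equiv.Perm (Fin m)) (v₀ : Fin m) : Set (FreeGroup (Fin n)) :=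
  {g | ∃ v, pwalk σ g.toWord v₀ = some v}

lemma pSet_translate (σ : Equiv.Perm (Fin m)) {v₀ v₁ : Fin m} {g : FreeGroup (Fin n)}
    (hw : pwalk σ g.toWord v₀ = some v₁) : translate (pSet σ v₀) g = pSet σ v₁ := by
  ext x
  rw [mem_translate]
  constructor
  · rintro ⟨w, hww⟩
    have hx : x.toWord = FreeGroup.reduce (FreeGroup.invRev g.toWord ++ (g * x).toWord) := by
      have h1 : (g⁻¹ * (g * x)).toWord
          = FreeGroup.reduce ((g⁻¹).toWord ++ (g * x).toWord) := toWord_mul' _ _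
      rw [FreeGroup.toWord_inv] at h1
      rw [← h1]
      congr 1
      group
    have h2 : pwalk σ (FreeGroup.invRev g.toWord ++ (g * x).toWord) v₁ = some w := by
      rw [pwalk_append, pwalk_invRev hw, Option.bind_some]
      exact hww
    exact ⟨w, by rw [hx]; exact pwalk_red FreeGroup.reduce.red h2⟩
  · rintro ⟨w, hww⟩
    have hx : (g * x).toWord = FreeGroup.reduce (g.toWord ++ x.toWord) := toWord_mul' _ _
    have h2 : pwalk σ (g.toWord ++ x.toWord) v₀ = some w := by
      rw [pwalk_append, hw, Option.bind_some]
      exact hww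
    exact ⟨w, by rw [hx]; exact pwalk_red FreeGroup.reduce.red h2⟩

section WithLetters

/-- the positive letters -/
def la (_hn : 2 ≤ n) : Fin n × Bool := (⟨0, by omega⟩, true)
def lb (_hn : 2 ≤ n) : Fin n × Bool := (⟨1, by omega⟩, true)

lemma pstep_la (hn : 2 ≤ n) (σ : Equiv.Perm (Fin m)) (v : Fin m) :
    pstep σ v (la hn) = if h : v.val + 1 < m then some ⟨v.val + 1, h⟩ else none := by
  unfold pstep la
  simp

lemma pstep_lb (hn : 2 ≤ n) (σ : Equiv.Perm (Fin m)) (v : Fin m) : pstep σ v (lb hn) = some (σ v) := by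
  unfold pstep lb
  simp

lemma pwalk_repB (hn : 2 ≤ n) (σ : Equiv.Perm (Fin m)) :
    ∀ (k : ℕ) (v : Fin m), ∃ w, pwalk σ (List.replicate k (lb hn)) v = some w := by
  intro k
  induction k with
  | zero => exact fun v => ⟨v, rfl⟩
  | succ k ih =>
    intro v
    obtain ⟨w, hw⟩ := ih (σ v)
    refine ⟨w, ?_⟩
    rw [List.replicate_succ]
    show (pstep σ v (lb hn)).bind (pwalk σ (List.replicate k (lb hn))) = some w
    rw [pstep_lb hn σ v, Option.bind_some, hw]

lemma pwalk_repA_some (hn : 2 ≤ n) (σ : Equiv.Perm (Fin m)) :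
    ∀ (k : ℕ) (v : Fin m) (h : v.val + k < m),
      pwalk σ (List.replicate k (la hn)) v = some ⟨v.val + k, h⟩ := by
  intro k
  induction k with
  | zero => intro v h; simp [pwalk]
  | succ k ih =>
    intro v h
    rw [List.replicate_succ]
    show (pstep σ v (la hn)).bind (pwalk σ (List.replicate k (la hn))) = _
    rw [pstep_la hn σ v, dif_pos (by omega : v.val + 1 < m), Option.bind_some]
    have := ih ⟨v.val + 1, by omega⟩ (by simp; omega)
    rw [this]
    simp only [Option.some.injEq]
    apply Fin.ext
    simp
    omega

lemma pwalk_repA_none (hn : 2 ≤ n) (σ : Equiv.Perm (Fin m)) :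
    ∀ (k : ℕ) (v : Fin m), m ≤ v.val + k → pwalk σ (List.replicate k (la hn)) v = none := by
  intro k
  induction k with
  | zero =>
    intro v h
    exact absurd v.isLt (by omega)
  | succ k ih =>
    intro v h
    rw [List.replicate_succ]
    show (pstep σ v (la hn)).bind (pwalk σ (List.replicate k (la hn))) = none
    rw [pstep_la hn σ v]
    split_ifs with h1
    · rw [Option.bind_some]
      exact ih ⟨v.val + 1, h1⟩ (by simp; omega)
    · rfl

lemma mk_repB_mem (hn : 2 ≤ n) (σ : Equiv.Perm (Fin m)) (v₀ : Fin m) (k : ℕ) :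
    FreeGroup.mk (List.replicate k (lb hn)) ∈ pSet σ v₀ := by
  obtain ⟨w, hw⟩ := pwalk_repB hn σ k v₀
  refine ⟨w, ?_⟩
  rwa [FreeGroup.toWord_mk, FreeGroup.reduce_replicate]

lemma pSet_isTree (hn : 2 ≤ n) (σ : Equiv.Perm (Fin m)) (v₀ : Fin m) : IsTree (pSet σ v₀ : Set (FreeGroup (Fin n))) := by
  refine ⟨⟨v₀, by rw [FreeGroup.toWord_one]; rfl⟩, ?_, ?_⟩
  · apply Set.infinite_of_injective_forall_mem
      (f := fun k : ℕ => (FreeGroup.mk (List.replicate k (lb hn)) : FreeGroup (Fin n)))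
    · intro k1 k2 hk
      have h1 := congrArg (fun g : FreeGroup (Fin n) => g.toWord.length) hk
      simpa [FreeGroup.toWord_mk, FreeGroup.reduce_replicate] using h1
    · exact fun k => mk_repB_mem hn σ v₀ k
  · intro g hg h hpref
    obtain ⟨t, ht⟩ := isPref_iff.mp hpref
    obtain ⟨w, hw⟩ := hg
    rw [← ht, pwalk_append] at hw
    rcases Option.bind_eq_some_iff.mp hw with ⟨u, hu, _⟩
    exact ⟨u, hu⟩

/-- the periodic tree associated with a permutation -/
def pTree (hn : 2 ≤ n) (hm : 0 < m) (σ : Equiv.Perm (Fin m)) : X n :=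
  ⟨pSet σ ⟨0, hm⟩, pSet_isTree hn σ ⟨0, hm⟩⟩

lemma pTree_orbit_finite (hn : 2 ≤ n) (hm : 0 < m) (σ : Equiv.Perm (Fin m)) :
    (orbit (pTree hn hm σ)).Finite := by
  have hsub : orbit (pTree hn hm σ) ⊆ ⋃ v : Fin m, {T : X n | T.1 = pSet σ v} := by
    rintro S' ⟨g, hg, hS'⟩
    obtain ⟨v, hv⟩ := hg
    exact Set.mem_iUnion.mpr ⟨v, by rw [Set.mem_setOf_eq, hS']; exact pSet_translate σ hv⟩
  apply Set.Finite.subset _ hsub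
  apply Set.finite_iUnion
  intro v
  apply Set.Subsingleton.finite
  intro T hT T' hT'
  exact Subtype.ext (hT.trans hT'.symm)

/-- witness words -/
def wheel (hn : 2 ≤ n) (i j : ℕ) : List (Fin n × Bool) :=
  List.replicate i (la hn) ++ lb hn :: List.replicate j (la hn)

lemma wheel_reduced (hn : 2 ≤ n) (i j : ℕ) : FreeGroup.reduce (wheel hn i j) = wheel hn i j := by
  apply reduced_of_chain
  have hpos : ∀ x ∈ wheel hn i j, x.2 = true := by
    intro x hx
    unfold wheel at hx
    rcases List.mem_append.mp hx with h | h
    · rw [List.eq_of_mem_replicate h]; rfl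
    · rcases List.mem_cons.mp h with h | h
      · rw [h]; rfl
      · rw [List.eq_of_mem_replicate h]; rfl
    
  revert hpos
  generalize wheel hn i j = L
  intro hpos
  induction L with
  | nil => exact List.isChain_nil
  | cons c t ih =>
    apply List.isChain_cons.mpr
    refine ⟨?_, ih (fun x hx => hpos x (List.mem_cons_of_mem c hx))⟩
    intro y hy
    rintro ⟨_, h2⟩
    have hc : c.2 = true := hpos c (List.mem_cons_self (a := c) (l := t))
    have hyt : y.2 = true := hpos y (List.mem_cons_of_mem c (List.mem_of_mem_head? hy))
    rw [hc, hyt] at h2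
    simp at h2

lemma wheel_wlen (hn : 2 ≤ n) (i j : ℕ) : wlen (FreeGroup.mk (wheel hn i j) : FreeGroup (Fin n)) = i + 1 + j := by
  unfold wlen
  rw [FreeGroup.toWord_mk, wheel_reduced]
  unfold wheel
  simp
  omega

lemma wheel_mem_iff (hn : 2 ≤ n) (hm : 0 < m) (σ : Equiv.Perm (Fin m)) {i : ℕ} (j : ℕ) (hi : i < m) :
    (FreeGroup.mk (wheel hn i j) ∈ pSet σ (⟨0, hm⟩ : Fin m)) ↔ (σ ⟨i, hi⟩).val + j < m := by
  have htw : (FreeGroup.mk (wheel hn i j) : FreeGroup (Fin n)).toWord = wheel hn i j := by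
    rw [FreeGroup.toWord_mk, wheel_reduced]
  have hwa : pwalk σ (List.replicate i (la hn)) (⟨0, hm⟩ : Fin m) = some ⟨i, hi⟩ := by
    have := pwalk_repA_some hn σ i (⟨0, hm⟩ : Fin m) (by simpa using hi)
    rw [this]
    simp only [Option.some.injEq]
    exact Fin.ext (by simp)
  constructor
  · rintro ⟨v, hv⟩
    rw [htw] at hv
    unfold wheel at hv
    rw [pwalk_append, hwa, Option.bind_some] at hv
    have hv2 : (pstep σ ⟨i, hi⟩ (lb hn)).bind (pwalk σ (List.replicate j (la hn))) = some v := hv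
    rw [pstep_lb hn σ _, Option.bind_some] at hv2
    by_contra hcon
    rw [pwalk_repA_none hn σ j _ (by omega)] at hv2
    cases hv2
  · intro hlt
    refine ⟨⟨(σ ⟨i, hi⟩).val + j, hlt⟩, ?_⟩
    rw [htw]
    unfold wheel
    rw [pwalk_append, hwa, Option.bind_some]
    show (pstep σ ⟨i, hi⟩ (lb hn)).bind (pwalk σ (List.replicate j (la hn))) = _
    rw [pstep_lb hn σ _, Option.bind_some]
    exact pwalk_repA_some hn σ j _ hlt

lemma pTree_mono (hn : 2 ≤ n) {M : ℕ} (hm : 0 < m) (hM : 2 * m ≤ M + 1) (σ τ : Equiv.Perm (Fin m))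
    (hball : ball (pTree hn hm σ) M = ball (pTree hn hm τ) M) :
    ∀ i : Fin m, (τ i).val ≤ (σ i).val := by
  intro i
  set j := m - 1 - (σ i).val with hj
  have hσi : (σ i).val < m := (σ i).isLt
  have hmem : FreeGroup.mk (wheel hn i.val j) ∈ pSet σ (⟨0, hm⟩ : Fin m) := by
    rw [wheel_mem_iff hn hm σ j i.isLt]
    have : (⟨i.val, i.isLt⟩ : Fin m) = i := Fin.ext rfl
    rw [this]
    omega
  have hlen : wlen (FreeGroup.mk (wheel hn i.val j) : FreeGroup (Fin n)) ≤ M := by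
    rw [wheel_wlen]
    have := i.isLt
    omega
  have hballm : FreeGroup.mk (wheel hn i.val j) ∈ ball (pTree hn hm σ) M := ⟨hmem, hlen⟩
  rw [hball] at hballm
  have hmemτ := hballm.1
  have : (FreeGroup.mk (wheel hn i.val j) ∈ pSet τ (⟨0, hm⟩ : Fin m)) := hmemτ
  rw [wheel_mem_iff hn hm τ j i.isLt] at this
  have heq : (⟨i.val, i.isLt⟩ : Fin m) = i := Fin.ext rfl
  rw [heq] at this
  omega

lemma pTree_ball_inj (hn : 2 ≤ n) {M : ℕ} (hm : 0 < m) (hM : 2 * m ≤ M + 1) (σ τ : Equiv.Perm (Fin m))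
    (hball : ball (pTree hn hm σ) M = ball (pTree hn hm τ) M) : σ = τ := by
  apply Equiv.ext
  intro i
  exact Fin.ext (le_antisymm (pTree_mono hn hm hM τ σ hball.symm i) (pTree_mono hn hm hM σ τ hball i))

end WithLetters
end Automaton

section Counting
variable {n : ℕ}

lemma Lam_lower (hn : 2 ≤ n) {M : ℕ} (hM : 2 ≤ M) :
    Nat.factorial (M / 2) ≤ Lam {S : X n | (orbit S).Finite} M := by
  set m := M / 2 with hmdef
  have hm : 0 < m := by omega
  set f : Equiv.Perm (Fin m) → Set (FreeGroup (Fin n)) := fun σ => ball (pTree hn hm σ) M with hf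
  have hinj : Function.Injective f :=
    fun σ τ h => pTree_ball_inj hn hm (by omega) σ τ h
  have himg_fin : ((fun S => ball S M) '' {S : X n | (orbit S).Finite}).Finite := by
    apply Set.Finite.subset (FGball_finite n M).finite_subsets
    rintro P ⟨S, _, rfl⟩ g hg
    exact hg.2
  have hrange : Set.range f ⊆ (fun S => ball S M) '' {S : X n | (orbit S).Finite} := by
    rintro P ⟨σ, rfl⟩
    exact ⟨pTree hn hm σ, pTree_orbit_finite hn hm σ, rfl⟩
  calc Nat.factorial m = Fintype.card (Equiv.Perm (Fin m)) := by
        rw [Fintype.card_perm, Fintype.card_fin]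
    _ = Nat.card (Equiv.Perm (Fin m)) := Nat.card_eq_fintype_card.symm
    _ = Nat.card (Set.range f) := (Nat.card_range_of_injective hinj).symm
    _ = (Set.range f).ncard := Nat.card_coe_set_eq _
    _ ≤ Lam {S : X n | (orbit S).Finite} M := Set.ncard_le_ncard hrange himg_fin

lemma pow_le_fact (c : ℕ) : ∀ m, c ≤ m → c ^ (m - c) ≤ Nat.factorial m := by
  intro m
  induction m with
  | zero =>
    intro h
    have : c = 0 := by omega
    subst this
    simp [Nat.factorial]
  | succ m ih =>
    intro h
    by_cases hc : c = m + 1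
    · subst hc
      simp only [Nat.sub_self, pow_zero]
      exact Nat.one_le_iff_ne_zero.mpr (Nat.factorial_ne_zero _)
    · have hcm : c ≤ m := by omega
      have h1 : m + 1 - c = (m - c) + 1 := by omega
      rw [h1, pow_succ, Nat.factorial_succ]
      calc c ^ (m - c) * c ≤ Nat.factorial m * (m + 1) :=
            Nat.mul_le_mul (ih hcm) (by omega)
        _ = (m + 1) * Nat.factorial m := Nat.mul_comm _ _

lemma tendsto_Lam (n : ℕ) (hn : 2 ≤ n) :
    Filter.Tendsto
      (fun m : ℕ => ENNReal.ofReal (Real.log (Lam {S : X n | (orbit S).Finite} m)) / (m : ℝ≥0∞))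
      Filter.atTop (nhds ⊤) := by
  apply ENNReal.tendsto_nhds_top
  intro k
  set c := ⌈Real.exp (8 * ((k : ℝ) + 1))⌉₊ + 1 with hc
  have hcpos : 1 ≤ c := by omega
  have hclog : (8 : ℝ) * ((k : ℝ) + 1) ≤ Real.log c := by
    have h1 : Real.exp (8 * ((k : ℝ) + 1)) ≤ (c : ℝ) := by
      calc Real.exp (8 * ((k : ℝ) + 1)) ≤ (⌈Real.exp (8 * ((k : ℝ) + 1))⌉₊ : ℝ) := Nat.le_ceil _
        _ ≤ (c : ℝ) := by rw [hc]; push_cast; linarith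
    calc (8 : ℝ) * ((k : ℝ) + 1) = Real.log (Real.exp (8 * ((k : ℝ) + 1))) :=
          (Real.log_exp _).symm
      _ ≤ Real.log c := Real.log_le_log (Real.exp_pos _) h1
  filter_upwards [Filter.eventually_ge_atTop (max (4 * c) 8)] with M hM
  have hM4c : 4 * c ≤ M := le_trans (le_max_left _ _) hM
  have hM8 : 8 ≤ M := le_trans (le_max_right _ _) hM
  set m := M / 2 with hm
  set Λ := Lam {S : X n | (orbit S).Finite} M with hΛ
  have hfact : Nat.factorial m ≤ Λ := Lam_lower hn (by omega)
  have hpow : c ^ (m - c) ≤ Nat.factorial m := pow_le_fact c m (by omega)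
  have hMm : M ≤ 8 * (m - c) := by omega
  have hΛ1 : 1 ≤ Λ := le_trans (Nat.one_le_iff_ne_zero.mpr (Nat.factorial_ne_zero m)) hfact
  have hΛpos : (0 : ℝ) < (Λ : ℝ) := by exact_mod_cast hΛ1
  have hlog1 : ((m - c : ℕ) : ℝ) * Real.log c ≤ Real.log Λ := by
    calc ((m - c : ℕ) : ℝ) * Real.log c = Real.log ((c : ℝ) ^ (m - c)) := (Real.log_pow _ _).symm
      _ ≤ Real.log Λ := by
          apply Real.log_le_log (by positivity)
          have hcast : ((c ^ (m - c) : ℕ) : ℝ) ≤ (Λ : ℝ) := by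
            exact_mod_cast le_trans hpow hfact
          calc (c : ℝ) ^ (m - c) = ((c ^ (m - c) : ℕ) : ℝ) := by push_cast; ring
            _ ≤ (Λ : ℝ) := hcast
  have hreal : ((k : ℝ) + 1) * M ≤ Real.log Λ := by
    have hcast : (M : ℝ) ≤ 8 * ((m - c : ℕ) : ℝ) := by exact_mod_cast hMm
    calc ((k : ℝ) + 1) * M ≤ ((k : ℝ) + 1) * (8 * ((m - c : ℕ) : ℝ)) :=
          mul_le_mul_of_nonneg_left hcast (by positivity)
      _ = ((m - c : ℕ) : ℝ) * (8 * ((k : ℝ) + 1)) := by ring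
      _ ≤ ((m - c : ℕ) : ℝ) * Real.log c := mul_le_mul_of_nonneg_left hclog (by positivity)
      _ ≤ Real.log Λ := hlog1
  have hofM : (M : ℝ≥0∞) ≠ 0 := by
    simp only [ne_eq, Nat.cast_eq_zero]
    omega
  have hMtop : (M : ℝ≥0∞) ≠ ⊤ := ENNReal.natCast_ne_top M
  have h3 : ((k : ℝ≥0∞) + 1) * M ≤ ENNReal.ofReal (Real.log Λ) := by
    have h4 : ENNReal.ofReal (((k : ℝ) + 1) * M) ≤ ENNReal.ofReal (Real.log Λ) :=
      ENNReal.ofReal_le_ofReal hreal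
    rwa [ENNReal.ofReal_mul (by positivity), ENNReal.ofReal_add (by positivity) zero_le_one,
      ENNReal.ofReal_natCast, ENNReal.ofReal_one, ENNReal.ofReal_natCast] at h4
  calc (k : ℝ≥0∞) < (k : ℝ≥0∞) + 1 := ENNReal.lt_add_right (ENNReal.natCast_ne_top k) one_ne_zero
    _ = ((k : ℝ≥0∞) + 1) * M / M := by
        rw [mul_div_assoc, ENNReal.div_self hofM hMtop, mul_one]
    _ ≤ ENNReal.ofReal (Real.log Λ) / M := ENNReal.div_le_div_right h3 _
end Counting
/-- The set `𝒞` of trees with finite (periodic) orbits has Hausdorff dimension zero,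
while its lower (hence also upper) box dimension is infinite. -/
theorem periodic_trees_dimensions (n : ℕ) (hn : 2 ≤ n) :
    dimH {S : X n | (orbit S).Finite} = 0 ∧
    lowerBox {S : X n | (orbit S).Finite} = ⊤ ∧
    upperBox {S : X n | (orbit S).Finite} = ⊤ := by
  refine ⟨(periodic_countable n).dimH_zero, ?_, ?_⟩
  · exact (tendsto_Lam n hn).liminf_eq
  · exact (tendsto_Lam n hn).limsup_eq

end GraphTrees
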